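/- Let a > 0 and let z > 1 be real with (a² − 2)·z − a²·√(z² − 1) ≠ 0. Set ω = z − √(z² − 1), u_0 = 2/((a² − 2)·z − a²·√(z² − 1)) and u_n = a·u_0·ω^n for n ≥ 1. Then: (i) (a/2)·u_1 − z·u_0 = 1; (ii) (1/2)·(a·u_0 + u_2) − z·u_1 = 0; (iii) for every n ≥ 2, (1/2)·(u_{n−1} + u_{n+1}) − z·u_n = 0; (iv) the sequence (u_n) is square-summable; and (v) u_0 = 2ω/((a² − 1)ω² − 1). -/

import Mathlib

/-- For `a > 0`, real `z > 1` with `(a² − 2)z − a²√(z² − 1) ≠ 0`, the sequence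
`u_0 = 2/((a² − 2)z − a²√(z² − 1))`, `u_n = a·u_0·ω^n` (`n ≥ 1`, `ω = z − √(z² − 1)`)
is square-summable, solves `(H_a − z)u = e_0` componentwise, and
`u_0 = 2ω/((a² − 1)ω² − 1)`. -/
theorem stmt7 (a z : ℝ) (ha : 0 < a) (hz : 1 < z)
    (hD : (a ^ 2 - 2) * z - a ^ 2 * Real.sqrt (z ^ 2 - 1) ≠ 0) :
    let ω : ℝ := z - Real.sqrt (z ^ 2 - 1)
    let u : ℕ → ℝ := fun n =>
      if n = 0 then 2 / ((a ^ 2 - 2) * z - a ^ 2 * Real.sqrt (z ^ 2 - 1))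
      else a * (2 / ((a ^ 2 - 2) * z - a ^ 2 * Real.sqrt (z ^ 2 - 1))) * ω ^ n
    (a / 2) * u 1 - z * u 0 = 1 ∧
    (1 / 2) * (a * u 0 + u 2) - z * u 1 = 0 ∧
    (∀ n : ℕ, 2 ≤ n → (1 / 2) * (u (n - 1) + u (n + 1)) - z * u n = 0) ∧
    Summable (fun n : ℕ => (u n) ^ 2) ∧
    u 0 = 2 * ω / ((a ^ 2 - 1) * ω ^ 2 - 1) := by
  intro ω u
  have hs2 : Real.sqrt (z ^ 2 - 1) ^ 2 = z ^ 2 - 1 := Real.sq_sqrt (by nlinarith)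
  set s := Real.sqrt (z ^ 2 - 1) with hsdef
  have hs0 : 0 ≤ s := Real.sqrt_nonneg _
  have hslt : s < z := by nlinarith
  have hω0 : 0 < ω := by unfold ω; linarith
  have hω1 : ω < 1 := by unfold ω; nlinarith
  set D := (a ^ 2 - 2) * z - a ^ 2 * s with hDdef
  have hquad : ω ^ 2 - 2 * z * ω + 1 = 0 := by unfold ω; nlinarith
  have hkey : a ^ 2 * ω - 2 * z = D := by unfold ω D; ring
  have hu0 : u 0 = 2 / D := by simp [u, D, s]
  have hun : ∀ n : ℕ, n ≠ 0 → u n = a * (2 / D) * ω ^ n := by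
    intro n hn; simp [u, hn, D, s]
  refine ⟨?_, ?_, ?_, ?_, ?_⟩
  · rw [hun 1 (by norm_num), hu0]
    field_simp
    linear_combination (2 * D) * hkey
  · rw [hu0, hun 2 (by norm_num), hun 1 (by norm_num)]
    linear_combination (a / D) * hquad
  · intro n hn
    rw [hun (n-1) (by omega), hun (n+1) (by norm_num), hun n (by omega)]
    have h1 : n - 1 + 1 = n := by omega
    have h2 : ω ^ (n - 1 + 1) = ω ^ (n-1) * ω := pow_succ _ _
    rw [h1] at h2
    have h3 : ω ^ (n + 1) = ω ^ n * ω := pow_succ _ _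
    have h4 : ω ^ n = ω ^ (n-1) * ω := by rw [← h2]
    rw [h3, h4]
    have : (1:ℝ) + ω^2 - 2*z*ω = 0 := by linarith [hquad]
    linear_combination (a * (2 / D) * ω ^ (n - 1) / 2) * hquad
  · rw [← summable_nat_add_iff 1]
    have heq : ∀ n : ℕ, u (n + 1) ^ 2 = ((a * (2/D))^2 * ω^2) * (ω^2)^n := by
      intro n
      rw [hun (n+1) (by norm_num), mul_pow, pow_right_comm, pow_succ]
      ring
    simp only [heq]
    exact ((summable_geometric_of_lt_one (by positivity) (by nlinarith)).mul_left _)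
  · rw [hu0]
    have hDω : D * ω = (a ^ 2 - 1) * ω ^ 2 - 1 := by
      unfold ω D; nlinarith [hs2]
    rw [← hDω]
    rw [div_eq_div_iff hD (by positivity : D * ω ≠ 0)]
    ring
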